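/- For every pair (α,β) in the set {(4,1),(2,3)}, the braid b¹⁰_{α,β} = σ_3^{−1} σ_2^{−1} σ_1^{−1} σ_3^{−(1+β)} σ_2^{−1} σ_3 σ_2^{−α} σ_3^{−1} σ_2 σ_1^{−3} σ_3 σ_2 σ_1 σ_3^{−1} Δ_4^2 in the braid group B_4 is not quasipositive. -/

import Mathlib

open FreeGroup in
/-- The braid relations on `n` generators. -/
def braidRels (n : ℕ) : Set (FreeGroup (Fin n)) :=
  {r | (∃ i j : Fin n, (i : ℕ) + 1 = (j : ℕ) ∧
          r = of i * of j * of i * (of j * of i * of j)⁻¹) ∨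
       (∃ i j : Fin n, (i : ℕ) + 2 ≤ (j : ℕ) ∧
          r = of i * of j * (of j * of i)⁻¹)}

/-- The braid group `B_{n+1}`, presented with `n` generators `σ_1, …, σ_n`
(so `Braid (m - 1)` is the braid group on `m` strands). -/
def Braid (n : ℕ) : Type := PresentedGroup (braidRels n)

instance (n : ℕ) : Group (Braid n) :=
  inferInstanceAs (Group (PresentedGroup (braidRels n)))

/-- The Artin generator `σ_{i+1}` of the braid group (indices start at `0`,
so `σ 0` is the generator usually written `σ_1`). -/
def σ {n : ℕ} (i : Fin n) : Braid n := PresentedGroup.of i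

/-- A braid is quasipositive if it can be written as a (possibly empty) product
of conjugates `w σ_1 w⁻¹` of the first Artin generator. -/
def Quasipositive {n : ℕ} [NeZero n] (b : Braid n) : Prop :=
  ∃ l : List (Braid n), b = (l.map fun w => w * σ 0 * w⁻¹).prod


/-- `σ_1` in the braid group `B_4`. -/
def σ₁ : Braid 3 := σ 0
/-- `σ_2` in the braid group `B_4`. -/
def σ₂ : Braid 3 := σ 1
/-- `σ_3` in the braid group `B_4`. -/
def σ₃ : Braid 3 := σ 2
/-- The Garside element `Δ_4 = σ_1 σ_2 σ_3 σ_1 σ_2 σ_1` of `B_4`. -/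
def Δ₄ : Braid 3 := σ₁ * σ₂ * σ₃ * σ₁ * σ₂ * σ₁

/-! ### Auxiliary: reduced Burau representation at `t = 2` over `𝔽₇` -/

abbrev F7 := ZMod 7
instance : Fact (Nat.Prime 7) := ⟨by norm_num⟩
abbrev M3 := Matrix (Fin 3) (Fin 3) F7

open Matrix

def S1 : M3ˣ := ⟨!![5,0,0;1,1,0;0,0,1], !![3,0,0;4,1,0;0,0,1], by decide, by decide⟩
def S2 : M3ˣ := ⟨!![1,2,0;0,5,0;0,1,1], !![1,1,0;0,3,0;0,4,1], by decide, by decide⟩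
def S3 : M3ˣ := ⟨!![1,0,0;0,1,2;0,0,5], !![1,0,0;0,1,1;0,0,3], by decide, by decide⟩

def fB : Fin 3 → M3ˣ := ![S1, S2, S3]

lemma relB : ∀ r ∈ braidRels 3, FreeGroup.lift fB r = 1 := by
  rintro r (⟨i, j, hij, rfl⟩ | ⟨i, j, hij, rfl⟩) <;>
    fin_cases i <;> fin_cases j <;> simp_all <;>
    exact Units.ext (by decide)

def φ : Braid 3 →* M3ˣ := PresentedGroup.toGroup relB

lemma φσ (i : Fin 3) : φ (σ i) = fB i := PresentedGroup.toGroup.of relB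

lemma φσ0 : φ (σ 0) = S1 := φσ 0

/-! ### Auxiliary: exponent sum -/

def fE : Fin 3 → Multiplicative ℤ := fun _ => Multiplicative.ofAdd 1

lemma relE : ∀ r ∈ braidRels 3, FreeGroup.lift fE r = 1 := by
  rintro r (⟨i, j, hij, rfl⟩ | ⟨i, j, hij, rfl⟩) <;>
    simp only [_root_.map_mul, map_inv, FreeGroup.lift_apply_of, fE] <;> decide

def ε : Braid 3 →* Multiplicative ℤ := PresentedGroup.toGroup relE

lemma εσ (i : Fin 3) : ε (σ i) = Multiplicative.ofAdd 1 := PresentedGroup.toGroup.of relE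

/-! ### Conjugates of `S1` -/

lemma conj_shape (g : M3ˣ) : ∃ u v : Fin 3 → F7, v ⬝ᵥ u = 4 ∧
    (↑(g * S1 * g⁻¹) : M3) = 1 + vecMulVec u v := by
  refine ⟨(g : M3).mulVec ![4,1,0], vecMul ![1,0,0] (↑g⁻¹ : M3), ?_, ?_⟩
  · rw [dotProduct_mulVec, vecMul_vecMul]
    have h : (↑g⁻¹ : M3) * (↑g : M3) = 1 := Units.inv_mul g
    rw [h, vecMul_one]
    decide
  · have hS1 : (S1 : M3) = 1 + vecMulVec ![4,1,0] ![1,0,0] := by decide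
    show (↑g : M3) * (S1 : M3) * (↑g⁻¹ : M3) = _
    rw [hS1, mul_add, add_mul, mul_one]
    have h : (↑g : M3) * (↑g⁻¹ : M3) = 1 := Units.mul_inv g
    rw [h]
    congr 1
    ext i j
    simp only [Matrix.mul_apply, vecMulVec_apply, Matrix.mulVec, Matrix.vecMul,
      dotProduct, Fin.sum_univ_three]
    ring

lemma vecMulVec_sq (u v : Fin 3 → F7) (h : v ⬝ᵥ u = 4) :
    vecMulVec u v * vecMulVec u v = (4 : F7) • vecMulVec u v := by
  rw [← h]
  ext i j
  simp only [Matrix.mul_apply, vecMulVec_apply, Matrix.smul_apply, dotProduct,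
    Fin.sum_univ_three, smul_eq_mul]
  ring

lemma invlem (u v : Fin 3 → F7) (h : v ⬝ᵥ u = 4) :
    (1 + (4 : F7) • vecMulVec u v) * (1 + vecMulVec u v) = 1 := by
  simp only [mul_add, add_mul, mul_one, one_mul, smul_mul_assoc]
  rw [vecMulVec_sq u v h, smul_smul]
  have h1 : (4 : F7) • vecMulVec u v + (vecMulVec u v + ((4:F7) * 4) • vecMulVec u v)
      = ((4 : F7) + 1 + 4 * 4) • vecMulVec u v := by
    rw [add_smul, add_smul, one_smul, add_assoc]
  rw [add_assoc (1 : M3), h1, show ((4:F7) + 1 + 4 * 4) = 0 from by decide, zero_smul,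
    add_zero]

/-! ### The decidable obstruction -/

def okN (N : M3) : Prop :=
  N 0 0 + N 1 1 + N 2 2 = 4 ∧
  N 0 0 * N 1 1 = N 0 1 * N 1 0 ∧
  N 0 0 * N 1 2 = N 0 2 * N 1 0 ∧
  N 0 1 * N 1 2 = N 0 2 * N 1 1 ∧
  N 0 0 * N 2 1 = N 0 1 * N 2 0 ∧
  N 0 0 * N 2 2 = N 0 2 * N 2 0 ∧
  N 0 1 * N 2 2 = N 0 2 * N 2 1 ∧
  N 1 0 * N 2 1 = N 1 1 * N 2 0

instance (N : M3) : Decidable (okN N) := by unfold okN; infer_instance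

def normu (u0 u1 u2 : F7) : Prop :=
  u0 = 1 ∨ (u0 = 0 ∧ u1 = 1) ∨ (u0 = 0 ∧ u1 = 0 ∧ u2 = 1)

instance (u0 u1 u2 : F7) : Decidable (normu u0 u1 u2) := by unfold normu; infer_instance

def Nf (B : M3) (u0 u1 u2 v0 v1 v2 : F7) : M3 :=
  !![B 0 0 - 1 + 4 * u0 * (v0 * B 0 0 + v1 * B 1 0 + v2 * B 2 0), B 0 1 + 4 * u0 * (v0 * B 0 1 + v1 * B 1 1 + v2 * B 2 1), B 0 2 + 4 * u0 * (v0 * B 0 2 + v1 * B 1 2 + v2 * B 2 2);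
     B 1 0 + 4 * u1 * (v0 * B 0 0 + v1 * B 1 0 + v2 * B 2 0), B 1 1 - 1 + 4 * u1 * (v0 * B 0 1 + v1 * B 1 1 + v2 * B 2 1), B 1 2 + 4 * u1 * (v0 * B 0 2 + v1 * B 1 2 + v2 * B 2 2);
     B 2 0 + 4 * u2 * (v0 * B 0 0 + v1 * B 1 0 + v2 * B 2 0), B 2 1 + 4 * u2 * (v0 * B 0 1 + v1 * B 1 1 + v2 * B 2 1), B 2 2 - 1 + 4 * u2 * (v0 * B 0 2 + v1 * B 1 2 + v2 * B 2 2)]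

lemma NfEq (B : M3) (u v : Fin 3 → F7) :
    Nf B (u 0) (u 1) (u 2) (v 0) (v 1) (v 2) = (1 + (4:F7) • vecMulVec u v) * B - 1 := by
  ext i j
  fin_cases i <;> fin_cases j <;>
    simp [Nf, Matrix.mul_apply, Matrix.sub_apply, Matrix.add_apply, Matrix.one_apply,
      Fin.sum_univ_three, vecMulVec_apply, Matrix.smul_apply, smul_eq_mul] <;> ring

def Bm1 : M3 := !![2,5,0;0,3,6;6,1,3]
def Bm2 : M3 := !![6,5,1;1,3,1;6,0,1]

set_option maxRecDepth 100000 in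
set_option maxHeartbeats 4000000 in
lemma key1 : ∀ u0 u1 u2 : F7, normu u0 u1 u2 → ∀ v0 v1 v2 : F7,
    v0 * u0 + v1 * u1 + v2 * u2 = 4 → ¬ okN (Nf Bm1 u0 u1 u2 v0 v1 v2) := by decide

set_option maxRecDepth 100000 in
set_option maxHeartbeats 4000000 in
lemma key2 : ∀ u0 u1 u2 : F7, normu u0 u1 u2 → ∀ v0 v1 v2 : F7,
    v0 * u0 + v1 * u1 + v2 * u2 = 4 → ¬ okN (Nf Bm2 u0 u1 u2 v0 v1 v2) := by decide

/-! ### Putting the obstruction together -/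

lemma normalizeUV (u v : Fin 3 → F7) (h : v ⬝ᵥ u = 4) :
    ∃ u' v' : Fin 3 → F7, normu (u' 0) (u' 1) (u' 2) ∧ v' ⬝ᵥ u' = 4 ∧
      vecMulVec u' v' = vecMulVec u v := by
  have scale : ∀ c : F7, c ≠ 0 → (c • v) ⬝ᵥ (c⁻¹ • u) = 4 ∧
      vecMulVec (c⁻¹ • u) (c • v) = vecMulVec u v := by
    intro c hc
    have hcc : c * c⁻¹ = 1 := by exact mul_inv_cancel₀ hc
    constructor
    · rw [← h]
      simp only [dotProduct, Fin.sum_univ_three, Pi.smul_apply, smul_eq_mul]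
      linear_combination (v 0 * u 0 + v 1 * u 1 + v 2 * u 2) * hcc
    · ext i j
      simp only [vecMulVec_apply, Pi.smul_apply, smul_eq_mul]
      linear_combination (u i * v j) * hcc
  by_cases h0 : u 0 = 0
  · by_cases h1 : u 1 = 0
    · have h2 : u 2 ≠ 0 := by
        intro h2
        have h4 : (4 : F7) = 0 := by
          rw [← h]; simp [dotProduct, Fin.sum_univ_three, h0, h1, h2]
        exact absurd h4 (by decide)
      obtain ⟨hd, hm⟩ := scale (u 2) h2
      refine ⟨(u 2)⁻¹ • u, (u 2) • v, ?_, hd, hm⟩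
      right; right
      refine ⟨by simp [h0], by simp [h1], ?_⟩
      show (u 2)⁻¹ * u 2 = 1
      exact inv_mul_cancel₀ h2
    · obtain ⟨hd, hm⟩ := scale (u 1) h1
      refine ⟨(u 1)⁻¹ • u, (u 1) • v, ?_, hd, hm⟩
      right; left
      refine ⟨by simp [h0], ?_⟩
      show (u 1)⁻¹ * u 1 = 1
      exact inv_mul_cancel₀ h1
  · obtain ⟨hd, hm⟩ := scale (u 0) h0
    refine ⟨(u 0)⁻¹ • u, (u 0) • v, ?_, hd, hm⟩
    left
    show (u 0)⁻¹ * u 0 = 1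
    exact inv_mul_cancel₀ h0

lemma okN_vmv (u v : Fin 3 → F7) (h : v ⬝ᵥ u = 4) : okN (vecMulVec u v) := by
  have ht : u 0 * v 0 + (u 1 * v 1 + u 2 * v 2) = 4 := by
    rw [← h]
    simp only [dotProduct, Fin.sum_univ_three]
    ring
  refine ⟨?_, ?_, ?_, ?_, ?_, ?_, ?_, ?_⟩ <;>
    simp only [vecMulVec_apply] <;> [skip; ring; ring; ring; ring; ring; ring; ring]
  rw [← ht]; ring

lemma not_prod_two (Bm : M3)
    (hkey : ∀ u0 u1 u2 : F7, normu u0 u1 u2 → ∀ v0 v1 v2 : F7,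
      v0 * u0 + v1 * u1 + v2 * u2 = 4 → ¬ okN (Nf Bm u0 u1 u2 v0 v1 v2))
    (u1 v1 u2 v2 : Fin 3 → F7) (h1 : v1 ⬝ᵥ u1 = 4) (h2 : v2 ⬝ᵥ u2 = 4) :
    (1 + vecMulVec u1 v1) * (1 + vecMulVec u2 v2) ≠ Bm := by
  intro hB
  obtain ⟨u', v', hnorm, hd, hvv⟩ := normalizeUV u1 v1 h1
  have hinv : (1 + (4:F7) • vecMulVec u' v') * (1 + vecMulVec u1 v1) = 1 := by
    rw [hvv]; exact invlem u1 v1 h1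
  have hX2 : (1 + (4:F7) • vecMulVec u' v') * Bm = 1 + vecMulVec u2 v2 := by
    rw [← hB, ← mul_assoc, hinv, one_mul]
  have hN : Nf Bm (u' 0) (u' 1) (u' 2) (v' 0) (v' 1) (v' 2) = vecMulVec u2 v2 := by
    rw [NfEq, hX2, add_sub_cancel_left]
  have hdot : v' 0 * u' 0 + v' 1 * u' 1 + v' 2 * u' 2 = 4 := by
    rw [← hd]; simp only [dotProduct, Fin.sum_univ_three]
  exact hkey (u' 0) (u' 1) (u' 2) hnorm (v' 0) (v' 1) (v' 2) hdot
    (hN ▸ okN_vmv u2 v2 h2)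

theorem b10_not_quasipositive :
    ∀ α β : ℕ, (α, β) ∈ ({(4,1),(2,3)} : Set (ℕ × ℕ)) →
      ¬ Quasipositive
        (σ₃⁻¹ * σ₂⁻¹ * σ₁⁻¹ * (σ₃ ^ (1 + β))⁻¹ * σ₂⁻¹ * σ₃ * (σ₂ ^ α)⁻¹ * σ₃⁻¹ *
          σ₂ * (σ₁ ^ 3)⁻¹ * σ₃ * σ₂ * σ₁ * σ₃⁻¹ * Δ₄ ^ 2) := by
  intro α β hmem hqp
  obtain ⟨l, hl⟩ := hqp
  -- exponent sum of the word in each case is 2, so `l` has length 2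
  simp only [Set.mem_insert_iff, Set.mem_singleton_iff, Prod.mk.injEq] at hmem
  -- common length argument
  have hεp : ε ((l.map fun w => w * σ 0 * w⁻¹).prod) = Multiplicative.ofAdd (l.length : ℤ) := by
    rw [MonoidHom.map_list_prod, List.map_map]
    have hc : (ε ∘ fun w => w * σ 0 * w⁻¹) = fun _ => Multiplicative.ofAdd (1:ℤ) := by
      funext w
      simp only [Function.comp_apply, _root_.map_mul, map_inv, εσ]
      exact mul_inv_cancel_comm _ _
    rw [hc, List.map_const', List.prod_replicate, ← ofAdd_nsmul, nsmul_eq_mul, mul_one]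
  rcases hmem with ⟨rfl, rfl⟩ | ⟨rfl, rfl⟩
  · have hεb : ε (σ₃⁻¹ * σ₂⁻¹ * σ₁⁻¹ * (σ₃ ^ (1 + 1))⁻¹ * σ₂⁻¹ * σ₃ * (σ₂ ^ 4)⁻¹ * σ₃⁻¹ *
        σ₂ * (σ₁ ^ 3)⁻¹ * σ₃ * σ₂ * σ₁ * σ₃⁻¹ * Δ₄ ^ 2) = Multiplicative.ofAdd (2 : ℤ) := by
      simp only [σ₁, σ₂, σ₃, Δ₄, _root_.map_mul, map_inv, map_pow, εσ]
      decide
    have hlen : l.length = 2 := by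
      have h2 : (2 : ℤ) = (l.length : ℤ) :=
        congrArg Multiplicative.toAdd ((hl ▸ hεb).symm.trans hεp)
      exact_mod_cast h2.symm
    rcases l with _ | ⟨w1, l⟩; · simp at hlen
    rcases l with _ | ⟨w2, l⟩; · simp at hlen
    rcases l with _ | ⟨w3, l⟩; swap; · simp only [List.length_cons] at hlen; omega
    simp only [List.map_cons, List.map_nil, List.prod_cons, List.prod_nil, mul_one] at hl
    have hφb : (↑(φ (σ₃⁻¹ * σ₂⁻¹ * σ₁⁻¹ * (σ₃ ^ (1 + 1))⁻¹ * σ₂⁻¹ * σ₃ * (σ₂ ^ 4)⁻¹ * σ₃⁻¹ *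
        σ₂ * (σ₁ ^ 3)⁻¹ * σ₃ * σ₂ * σ₁ * σ₃⁻¹ * Δ₄ ^ 2)) : M3) = Bm1 := by
      simp only [σ₁, σ₂, σ₃, Δ₄, _root_.map_mul, map_inv, map_pow, φσ]
      decide
    have hw : φ (σ₃⁻¹ * σ₂⁻¹ * σ₁⁻¹ * (σ₃ ^ (1 + 1))⁻¹ * σ₂⁻¹ * σ₃ * (σ₂ ^ 4)⁻¹ * σ₃⁻¹ *
        σ₂ * (σ₁ ^ 3)⁻¹ * σ₃ * σ₂ * σ₁ * σ₃⁻¹ * Δ₄ ^ 2)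
        = φ w1 * S1 * (φ w1)⁻¹ * (φ w2 * S1 * (φ w2)⁻¹) := by
      rw [hl]; simp only [_root_.map_mul, map_inv, φσ0]
    obtain ⟨u1, v1, hd1, hm1⟩ := conj_shape (φ w1)
    obtain ⟨u2, v2, hd2, hm2⟩ := conj_shape (φ w2)
    refine not_prod_two Bm1 key1 u1 v1 u2 v2 hd1 hd2 ?_
    rw [← hm1, ← hm2, ← Units.val_mul, ← hw, hφb]
  · have hεb : ε (σ₃⁻¹ * σ₂⁻¹ * σ₁⁻¹ * (σ₃ ^ (1 + 3))⁻¹ * σ₂⁻¹ * σ₃ * (σ₂ ^ 2)⁻¹ * σ₃⁻¹ *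
        σ₂ * (σ₁ ^ 3)⁻¹ * σ₃ * σ₂ * σ₁ * σ₃⁻¹ * Δ₄ ^ 2) = Multiplicative.ofAdd (2 : ℤ) := by
      simp only [σ₁, σ₂, σ₃, Δ₄, _root_.map_mul, map_inv, map_pow, εσ]
      decide
    have hlen : l.length = 2 := by
      have h2 : (2 : ℤ) = (l.length : ℤ) :=
        congrArg Multiplicative.toAdd ((hl ▸ hεb).symm.trans hεp)
      exact_mod_cast h2.symm
    rcases l with _ | ⟨w1, l⟩; · simp at hlen
    rcases l with _ | ⟨w2, l⟩; · simp at hlen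
    rcases l with _ | ⟨w3, l⟩; swap; · simp only [List.length_cons] at hlen; omega
    simp only [List.map_cons, List.map_nil, List.prod_cons, List.prod_nil, mul_one] at hl
    have hφb : (↑(φ (σ₃⁻¹ * σ₂⁻¹ * σ₁⁻¹ * (σ₃ ^ (1 + 3))⁻¹ * σ₂⁻¹ * σ₃ * (σ₂ ^ 2)⁻¹ * σ₃⁻¹ *
        σ₂ * (σ₁ ^ 3)⁻¹ * σ₃ * σ₂ * σ₁ * σ₃⁻¹ * Δ₄ ^ 2)) : M3) = Bm2 := by
      simp only [σ₁, σ₂, σ₃, Δ₄, _root_.map_mul, map_inv, map_pow, φσ]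
      decide
    have hw : φ (σ₃⁻¹ * σ₂⁻¹ * σ₁⁻¹ * (σ₃ ^ (1 + 3))⁻¹ * σ₂⁻¹ * σ₃ * (σ₂ ^ 2)⁻¹ * σ₃⁻¹ *
        σ₂ * (σ₁ ^ 3)⁻¹ * σ₃ * σ₂ * σ₁ * σ₃⁻¹ * Δ₄ ^ 2)
        = φ w1 * S1 * (φ w1)⁻¹ * (φ w2 * S1 * (φ w2)⁻¹) := by
      rw [hl]; simp only [_root_.map_mul, map_inv, φσ0]
    obtain ⟨u1, v1, hd1, hm1⟩ := conj_shape (φ w1)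
    obtain ⟨u2, v2, hd2, hm2⟩ := conj_shape (φ w2)
    refine not_prod_two Bm2 key2 u1 v1 u2 v2 hd1 hd2 ?_
    rw [← hm1, ← hm2, ← Units.val_mul, ← hw, hφb]
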